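/- Let f, g : ℝ → ℝ be integrable on [0,1] with ∫_0^1 f(t) dt = 1 and ∫_0^1 g(t) dt = 1, and let c be a real constant. Then for every y ∈ [0,1]: ∫_0^y c·[(∫_0^x g(t) dt)·(∫_x^1 f(t) dt) − (∫_0^x f(t) dt)·(∫_x^1 g(t) dt)] dx = c·∫_0^y (∫_x^1 f(t) dt − ∫_x^1 g(t) dt) dx. -/
import Mathlib

open MeasureTheory intervalIntegral

/-- For probability densities `f` and `g` on `[0,1]` and a constant `c`,
`∫₀ʸ c·[(∫₀ˣ g)(∫ₓ¹ f) - (∫₀ˣ f)(∫ₓ¹ g)] dx = c · ∫₀ʸ (∫ₓ¹ f - ∫ₓ¹ g) dx`. -/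
theorem sgan_optimal_discriminator (f g : ℝ → ℝ) (c : ℝ)
    (hf : IntervalIntegrable f volume 0 1)
    (hg : IntervalIntegrable g volume 0 1)
    (hf1 : (∫ t in (0:ℝ)..1, f t) = 1)
    (hg1 : (∫ t in (0:ℝ)..1, g t) = 1) :
    ∀ y ∈ Set.Icc (0:ℝ) 1,
      (∫ x in (0:ℝ)..y,
          c * ((∫ t in (0:ℝ)..x, g t) * (∫ t in x..(1:ℝ), f t) -
                (∫ t in (0:ℝ)..x, f t) * (∫ t in x..(1:ℝ), g t))) =
        c * ∫ x in (0:ℝ)..y,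
          ((∫ t in x..(1:ℝ), f t) - (∫ t in x..(1:ℝ), g t)) := by
  intro y hy
  rw [← intervalIntegral.integral_const_mul]
  apply intervalIntegral.integral_congr
  intro x hx
  have hx' : x ∈ Set.Icc (0:ℝ) 1 := by
    rcases Set.mem_uIcc.mp hx with h | h
    · exact ⟨h.1, h.2.trans hy.2⟩
    · exact ⟨hy.1.trans h.1, h.2.trans zero_le_one⟩
  have hF : (∫ t in (0:ℝ)..x, f t) + (∫ t in x..(1:ℝ), f t) = 1 := by
    rw [intervalIntegral.integral_add_adjacent_intervals
      (hf.mono_set (Set.uIcc_subset_uIcc_left (Set.Icc_subset_uIcc hx')))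
      (hf.mono_set (Set.uIcc_subset_uIcc_right (Set.Icc_subset_uIcc hx'))), hf1]
  have hG : (∫ t in (0:ℝ)..x, g t) + (∫ t in x..(1:ℝ), g t) = 1 := by
    rw [intervalIntegral.integral_add_adjacent_intervals
      (hg.mono_set (Set.uIcc_subset_uIcc_left (Set.Icc_subset_uIcc hx')))
      (hg.mono_set (Set.uIcc_subset_uIcc_right (Set.Icc_subset_uIcc hx'))), hg1]
  simp only
  linear_combination c * (∫ t in x..(1:ℝ), f t) * hG - c * (∫ t in x..(1:ℝ), g t) * hF
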